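/- Let X be a ℤ₂^{n+1}-equivariant triangulation of the sphere Sⁿ in ℝ^{n+1}. Suppose there is a vertex v of X with exactly k nonzero coordinates, where 3 ≤ k ≤ n+1. Then X has at least 2^{k−1}(2^k − k − 1) missing edges. -/

import Mathlib

open Set

noncomputable section

/-- The sign-change map `x ↦ (ε₁x₁, …, εₙxₙ)` on `EuclideanSpace ℝ (Fin n)`. -/
def signMap {n : ℕ} (ε : Fin n → ℝ) (x : EuclideanSpace ℝ (Fin n)) :
    EuclideanSpace ℝ (Fin n) :=
  WithLp.toLp 2 (fun i => ε i * x i)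

/-- `X` is a `ℤ₂ⁿ`-equivariant triangulation of the unit sphere `S^{n-1} ⊆ ℝⁿ`. -/
structure IsEquivSphereTriangulation (n : ℕ)
    (X : Geometry.SimplicialComplex ℝ (EuclideanSpace ℝ (Fin n))) : Prop where
  finite : X.faces.Finite
  zero_not_mem : (0 : EuclideanSpace ℝ (Fin n)) ∉ X.space
  radial_homeo : ∃ φ : X.space ≃ₜ (Metric.sphere (0 : EuclideanSpace ℝ (Fin n)) 1),
      ∀ x : X.space, (φ x : EuclideanSpace ℝ (Fin n)) =
        ‖(x : EuclideanSpace ℝ (Fin n))‖⁻¹ • (x : EuclideanSpace ℝ (Fin n))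
  equivariant : ∀ ε : Fin n → ℝ, (∀ i, ε i = 1 ∨ ε i = -1) →
      ∀ s ∈ X.faces, ∃ t ∈ X.faces,
        (t : Set (EuclideanSpace ℝ (Fin n))) = signMap ε '' (s : Set (EuclideanSpace ℝ (Fin n)))

/-- The missing edges of `X`: unordered pairs of distinct vertices whose segment is not a face. -/
def missingEdges {n : ℕ} (X : Geometry.SimplicialComplex ℝ (EuclideanSpace ℝ (Fin n))) :
    Set (Finset (EuclideanSpace ℝ (Fin n))) :=
  {e | e.card = 2 ∧ ↑e ⊆ X.vertices ∧ e ∉ X.faces}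

namespace StmtAux

variable {m : ℕ}

/-- Sign vector associated to a set of coordinates. -/
def sgn (A : Finset (Fin m)) : Fin m → ℝ := fun i => if i ∈ A then -1 else 1

lemma sgn_pm (A : Finset (Fin m)) : ∀ i, sgn A i = 1 ∨ sgn A i = -1 := by
  intro i; unfold sgn; split <;> simp

lemma sgn_eq_iff {A B : Finset (Fin m)} {i : Fin m} (h : sgn A i = sgn B i) :
    (i ∈ A ↔ i ∈ B) := by
  unfold sgn at h; split_ifs at h <;> norm_num at h <;> tauto

lemma signMap_apply (ε : Fin m → ℝ) (x : EuclideanSpace ℝ (Fin m)) (i : Fin m) :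
    signMap ε x i = ε i * x i := rfl

lemma signMap_signMap (A B : Finset (Fin m)) (x : EuclideanSpace ℝ (Fin m)) :
    signMap (sgn B) (signMap (sgn A) x) = signMap (sgn (symmDiff A B)) x := by
  ext i
  simp only [signMap_apply, sgn, Finset.mem_symmDiff]
  by_cases hA : i ∈ A <;> by_cases hB : i ∈ B <;> simp [hA, hB]

end StmtAux

set_option maxHeartbeats 2000000 in
open StmtAux in
theorem stmt1 (n k : ℕ)
    (X : Geometry.SimplicialComplex ℝ (EuclideanSpace ℝ (Fin (n + 1))))
    (hX : IsEquivSphereTriangulation (n + 1) X)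
    (v : EuclideanSpace ℝ (Fin (n + 1))) (hv : v ∈ X.vertices)
    (hk3 : 3 ≤ k) (hkn : k ≤ n + 1)
    (hsupp : {i : Fin (n + 1) | v i ≠ 0}.ncard = k) :
    2 ^ (k - 1) * (2 ^ k - k - 1) ≤ (missingEdges X).ncard := by
  classical
  -- the support of v as a finset
  set S : Finset (Fin (n + 1)) := Finset.univ.filter (fun i => v i ≠ 0) with hSdef
  have hScard : S.card = k := by
    rw [← hsupp, ← Set.ncard_coe_finset]
    congr 1
    ext i
    simp [hSdef]
  have hvS : ∀ i ∈ S, v i ≠ 0 := by intro i hi; simpa [hSdef] using hi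
  -- the signed copies of v
  set w : Finset (Fin (n + 1)) → EuclideanSpace ℝ (Fin (n + 1)) :=
    fun A => signMap (sgn A) v with hwdef
  -- injectivity on subsets of S
  have hinj : ∀ A ⊆ S, ∀ B ⊆ S, w A = w B → A = B := by
    intro A hA B hB h
    ext i
    by_cases hiS : i ∈ S
    · have hvi := hvS i hiS
      have h1 : sgn A i * v i = sgn B i * v i := congrArg (fun x => x i) h
      exact sgn_eq_iff (mul_right_cancel₀ hvi h1)
    · constructor
      · intro hiA; exact absurd (hA hiA) hiS
      · intro hiB; exact absurd (hB hiB) hiS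
  -- all signed copies are vertices
  have hvert : ∀ A : Finset (Fin (n + 1)), w A ∈ X.vertices := by
    intro A
    obtain ⟨t, ht, hts⟩ := hX.equivariant (sgn A) (sgn_pm A) {v} hv
    have : (t : Set (EuclideanSpace ℝ (Fin (n + 1)))) = {w A} := by
      rw [hts]; simp [hwdef]
    rw [Finset.coe_eq_singleton] at this
    rwa [Geometry.SimplicialComplex.mem_vertices, ← this]
  -- the key geometric step: pairs at symmetric-difference distance ≥ 2 give missing edges
  have hmiss : ∀ A ⊆ S, ∀ B ⊆ S, 2 ≤ (symmDiff A B).card →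
      ({w A, w B} : Finset (EuclideanSpace ℝ (Fin (n + 1)))) ∈ missingEdges X := by
    intro A hA B hB hcard
    have hAB : A ≠ B := by
      intro h; rw [h, symmDiff_self] at hcard; simp at hcard
    have hwAB : w A ≠ w B := fun h => hAB (hinj A hA B hB h)
    refine ⟨Finset.card_pair hwAB, ?_, ?_⟩
    · intro x hx
      simp only [Finset.coe_insert, Finset.coe_singleton, Set.mem_insert_iff,
        Set.mem_singleton_iff] at hx
      rcases hx with h | h <;> (rw [h]; exact hvert _)
    · intro hface
      -- pick two distinct elements of the symmetric difference
      obtain ⟨i, hi, j, hj, hij⟩ := Finset.one_lt_card.1 (by omega : 1 < (symmDiff A B).card)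
      have hiS : i ∈ S := by
        rcases Finset.mem_symmDiff.1 hi with ⟨h1, _⟩ | ⟨h1, _⟩
        exacts [hA h1, hB h1]
      -- flip coordinate i
      obtain ⟨t, ht, hts⟩ := hX.equivariant (sgn {i}) (sgn_pm {i}) _ hface
      have htval : (t : Set (EuclideanSpace ℝ (Fin (n + 1)))) =
          {w (symmDiff A {i}), w (symmDiff B {i})} := by
        rw [hts]
        simp only [Finset.coe_insert, Finset.coe_singleton, Set.image_insert_eq,
          Set.image_singleton, hwdef]
        rw [signMap_signMap, signMap_signMap]
      have htfin : t = {w (symmDiff A {i}), w (symmDiff B {i})} := by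
        apply Finset.coe_injective
        rw [htval]; simp
      -- subsets of S
      have hA' : symmDiff A {i} ⊆ S := by
        intro x hx
        rcases Finset.mem_symmDiff.1 hx with ⟨h1, _⟩ | ⟨h1, _⟩
        · exact hA h1
        · rwa [Finset.mem_singleton.1 h1]
      have hB' : symmDiff B {i} ⊆ S := by
        intro x hx
        rcases Finset.mem_symmDiff.1 hx with ⟨h1, _⟩ | ⟨h1, _⟩
        · exact hB h1
        · rwa [Finset.mem_singleton.1 h1]
      -- distinctness of the four points
      have hne1 : w A ≠ w (symmDiff A {i}) := by
        intro h
        have := hinj A hA _ hA' h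
        have : (i ∈ A) ↔ (i ∈ symmDiff A {i}) := by rw [← this]
        simp [Finset.mem_symmDiff] at this
      have hne2 : w A ≠ w (symmDiff B {i}) := by
        intro h
        have hABi := hinj A hA _ hB' h
        have hj' : (j ∈ A) ↔ (j ∈ symmDiff B {i}) := by rw [← hABi]
        simp only [Finset.mem_symmDiff, Finset.mem_singleton] at hj' hj
        tauto
      have hne3 : w B ≠ w (symmDiff A {i}) := by
        intro h
        have hBAi := hinj B hB _ hA' h
        have hj' : (j ∈ B) ↔ (j ∈ symmDiff A {i}) := by rw [← hBAi]
        simp only [Finset.mem_symmDiff, Finset.mem_singleton] at hj' hj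
        tauto
      have hne4 : w B ≠ w (symmDiff B {i}) := by
        intro h
        have := hinj B hB _ hB' h
        have : (i ∈ B) ↔ (i ∈ symmDiff B {i}) := by rw [← this]
        simp [Finset.mem_symmDiff] at this
      -- the common midpoint
      have hflip : ∀ C : Finset (Fin (n + 1)), w (symmDiff C {i}) = signMap (sgn {i}) (w C) :=
        fun C => (signMap_signMap C {i} v).symm
      have hzero : w A i + w B i = 0 := by
        simp only [hwdef, signMap_apply]
        rcases Finset.mem_symmDiff.1 hi with ⟨h1, h2⟩ | ⟨h1, h2⟩ <;> simp [sgn, h1, h2]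
      have hsum : w (symmDiff A {i}) + w (symmDiff B {i}) = w A + w B := by
        ext l
        have happ : ∀ (x y : EuclideanSpace ℝ (Fin (n + 1))), (x + y) l = x l + y l :=
          fun _ _ => rfl
        have h1 : w (symmDiff A {i}) l = sgn {i} l * w A l :=
          congrArg (fun x => x l) (hflip A)
        have h2 : w (symmDiff B {i}) l = sgn {i} l * w B l :=
          congrArg (fun x => x l) (hflip B)
        rw [happ, happ, h1, h2]
        by_cases hl : l = i
        · subst hl
          simp only [sgn, Finset.mem_singleton, if_true, if_pos]
          linarith [hzero]
        · simp [sgn, hl]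
      set z := midpoint ℝ (w A) (w B) with hzdef
      have hz1 : z ∈ convexHull ℝ ({w A, w B} : Set (EuclideanSpace ℝ (Fin (n + 1)))) := by
        rw [convexHull_pair]
        exact midpoint_mem_segment _ _
      have hz2 : z ∈ convexHull ℝ
          ({w (symmDiff A {i}), w (symmDiff B {i})} : Set (EuclideanSpace ℝ (Fin (n + 1)))) := by
        have : z = midpoint ℝ (w (symmDiff A {i})) (w (symmDiff B {i})) := by
          rw [hzdef, midpoint_eq_smul_add, midpoint_eq_smul_add, hsum]
        rw [this, convexHull_pair]
        exact midpoint_mem_segment _ _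
      have hinter := X.inter_subset_convexHull hface ht
      have hz3 : z ∈ convexHull ℝ
          ((({w A, w B} : Finset (EuclideanSpace ℝ (Fin (n + 1)))) : Set _) ∩
            (↑t : Set (EuclideanSpace ℝ (Fin (n + 1))))) := by
        apply hinter
        constructor
        · simpa using hz1
        · rw [htval]; exact hz2
      have hempty : (({w A, w B} : Finset (EuclideanSpace ℝ (Fin (n + 1)))) : Set _) ∩
          (↑t : Set (EuclideanSpace ℝ (Fin (n + 1)))) = ∅ := by
        rw [htval]
        ext x
        simp only [Finset.coe_insert, Finset.coe_singleton, Set.mem_inter_iff,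
          Set.mem_insert_iff, Set.mem_singleton_iff, Set.mem_empty_iff_false, iff_false,
          not_and, not_or]
        rintro (rfl | rfl)
        · exact ⟨hne1, hne2⟩
        · exact ⟨hne3, hne4⟩
      rw [hempty, convexHull_empty] at hz3
      exact hz3
  -- counting
  set P : Finset (Finset (Fin (n + 1))) := S.powerset with hPdef
  have hPcard : P.card = 2 ^ k := by rw [hPdef, Finset.card_powerset, hScard]
  set Q : Finset (Finset (Fin (n + 1)) × Finset (Fin (n + 1))) :=
    (P ×ˢ P).filter (fun p => 2 ≤ (symmDiff p.1 p.2).card) with hQdef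
  have hsymmsub : ∀ {A B : Finset (Fin (n + 1))}, A ⊆ S → B ⊆ S → symmDiff A B ⊆ S := by
    intro A B hA hB x hx
    rcases Finset.mem_symmDiff.1 hx with ⟨h1, _⟩ | ⟨h1, _⟩
    exacts [hA h1, hB h1]
  have hQmem : ∀ p : Finset (Fin (n + 1)) × Finset (Fin (n + 1)),
      p ∈ Q ↔ p.1 ⊆ S ∧ p.2 ⊆ S ∧ 2 ≤ (symmDiff p.1 p.2).card := by
    intro p
    simp [hQdef, hPdef, Finset.mem_filter, Finset.mem_product, and_assoc]
  set M : Finset (Finset (EuclideanSpace ℝ (Fin (n + 1)))) :=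
    Q.image (fun p => ({w p.1, w p.2} : Finset _)) with hMdef
  -- M consists of missing edges
  have hMsub : (M : Set (Finset (EuclideanSpace ℝ (Fin (n + 1))))) ⊆ missingEdges X := by
    intro e he
    simp only [hMdef, Finset.coe_image, Set.mem_image, Finset.mem_coe] at he
    obtain ⟨⟨A, B⟩, hABQ, rfl⟩ := he
    obtain ⟨hA, hB, hc⟩ := (hQmem _).1 hABQ
    exact hmiss A hA B hB hc
  -- missingEdges is finite
  have hfinV : X.vertices.Finite := by
    have : X.vertices = (fun x => ({x} : Finset (EuclideanSpace ℝ (Fin (n + 1))))) ⁻¹' X.faces :=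
      rfl
    rw [this]
    exact Set.Finite.preimage (Set.injOn_of_injective Finset.singleton_injective) hX.finite
  have hfinME : (missingEdges X).Finite := by
    apply Set.Finite.subset (Set.finite_coe_iff.mp ?_ : (↑hfinV.toFinset.powerset :
      Set (Finset (EuclideanSpace ℝ (Fin (n + 1))))).Finite)
    · intro e he
      simp only [Finset.coe_powerset, Set.mem_preimage, Set.mem_powerset_iff,
        Finset.coe_subset, Set.mem_setOf_eq]
      intro x hx
      simp only [Set.Finite.mem_toFinset]
      exact he.2.1 hx
    · exact Set.finite_coe_iff.mpr (Finset.finite_toSet _)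
  have hMle : M.card ≤ (missingEdges X).ncard := by
    rw [← Set.ncard_coe_finset]
    exact Set.ncard_le_ncard hMsub hfinME
  -- fibers of the map Q → M have size at most 2
  have hfib : Q.card ≤ 2 * M.card := by
    apply Finset.card_le_mul_card_image
    intro b hb
    simp only [hMdef, Finset.mem_image] at hb
    obtain ⟨⟨A, B⟩, hABQ, hABb⟩ := hb
    obtain ⟨hAP, hBP, -⟩ := (hQmem _).1 hABQ
    have : Q.filter (fun a => ({w a.1, w a.2} : Finset _) = b) ⊆ {(A, B), (B, A)} := by
      intro ⟨C, D⟩ hCD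
      simp only [Finset.mem_filter] at hCD
      obtain ⟨hCDQ, hCDb⟩ := hCD
      obtain ⟨hCP, hDP, -⟩ := (hQmem _).1 hCDQ
      have hpair : ({w C, w D} : Set (EuclideanSpace ℝ (Fin (n + 1)))) = {w A, w B} := by
        have heq : ({w C, w D} : Finset (EuclideanSpace ℝ (Fin (n + 1)))) = {w A, w B} :=
          hCDb.trans hABb.symm
        have h2 : (({w C, w D} : Finset (EuclideanSpace ℝ (Fin (n + 1)))) :
              Set (EuclideanSpace ℝ (Fin (n + 1)))) =
            (({w A, w B} : Finset (EuclideanSpace ℝ (Fin (n + 1)))) :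
              Set (EuclideanSpace ℝ (Fin (n + 1)))) := by rw [heq]
        simpa using h2
      rw [Set.pair_eq_pair_iff] at hpair
      simp only [Finset.mem_insert, Finset.mem_singleton, Prod.mk.injEq]
      rcases hpair with ⟨h1, h2⟩ | ⟨h1, h2⟩
      · left
        exact ⟨hinj C hCP A hAP h1, hinj D hDP B hBP h2⟩
      · right
        exact ⟨hinj C hCP B hBP h1, hinj D hDP A hAP h2⟩
    calc (Q.filter (fun a => ({w a.1, w a.2} : Finset _) = b)).card
        ≤ ({(A, B), (B, A)} : Finset _).card := Finset.card_le_card this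
      _ ≤ 2 := Finset.card_insert_le _ _ |>.trans (by simp)
  -- counting Q via the bijection (A, B) ↦ (A, A ∆ B)
  have hQcard : Q.card = 2 ^ k * (2 ^ k - k - 1) := by
    have hTmem : ∀ p : Finset (Fin (n + 1)) × Finset (Fin (n + 1)),
        p ∈ (P ×ˢ P).filter (fun p => 2 ≤ p.2.card) ↔
          p.1 ⊆ S ∧ p.2 ⊆ S ∧ 2 ≤ p.2.card := by
      intro p
      simp [hPdef, Finset.mem_filter, Finset.mem_product, and_assoc]
    have hbij : Q.card = ((P ×ˢ P).filter (fun p => 2 ≤ p.2.card)).card := by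
      refine Finset.card_bij' (fun p _ => (p.1, symmDiff p.1 p.2))
        (fun p _ => (p.1, symmDiff p.1 p.2)) ?_ ?_ ?_ ?_
      · intro p hp
        obtain ⟨h1, h2, h3⟩ := (hQmem p).1 hp
        exact (hTmem _).2 ⟨h1, hsymmsub h1 h2, h3⟩
      · intro p hp
        obtain ⟨h1, h2, h3⟩ := (hTmem p).1 hp
        refine (hQmem _).2 ⟨h1, hsymmsub h1 h2, ?_⟩
        rwa [symmDiff_symmDiff_cancel_left]
      · intro p _
        simp [symmDiff_symmDiff_cancel_left]
      · intro p _
        simp [symmDiff_symmDiff_cancel_left]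
    rw [hbij]
    have hsplit : (P ×ˢ P).filter (fun p => 2 ≤ p.2.card) =
        P ×ˢ (P.filter (fun C => 2 ≤ C.card)) := by
      ext ⟨A, C⟩
      simp only [Finset.mem_filter, Finset.mem_product]
      tauto
    rw [hsplit, Finset.card_product, hPcard]
    congr 1
    -- count subsets of S of size ≥ 2
    have hneg : (P.filter (fun C => ¬ 2 ≤ C.card)).card = k + 1 := by
      have h01 : P.filter (fun C => ¬ 2 ≤ C.card) =
          P.filter (fun C => C.card = 0) ∪ P.filter (fun C => C.card = 1) := by
        ext C
        simp only [Finset.mem_filter, Finset.mem_union]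
        by_cases hCP : C ∈ P
        · simp only [hCP, true_and]
          omega
        · simp [hCP]
      rw [h01, Finset.card_union_of_disjoint]
      · rw [← Finset.powersetCard_eq_filter, ← Finset.powersetCard_eq_filter,
          Finset.card_powersetCard, Finset.card_powersetCard, hScard,
          Nat.choose_zero_right, Nat.choose_one_right, Nat.add_comm]
      · rw [Finset.disjoint_filter]
        intro C _ h0 h1
        omega
    have hpos := Finset.card_filter_add_card_filter_not
      (s := P) (p := fun C => 2 ≤ C.card)
    rw [hneg, hPcard] at hpos
    omega
  -- put everything together
  have h2 : 2 * (2 ^ (k - 1) * (2 ^ k - k - 1)) ≤ 2 * (missingEdges X).ncard := by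
    have hpow : 2 * 2 ^ (k - 1) = 2 ^ k := by
      rw [← pow_succ']
      congr 1
      omega
    calc 2 * (2 ^ (k - 1) * (2 ^ k - k - 1)) = 2 ^ k * (2 ^ k - k - 1) := by
          rw [← mul_assoc, hpow]
      _ = Q.card := hQcard.symm
      _ ≤ 2 * M.card := hfib
      _ ≤ 2 * (missingEdges X).ncard := by omega
  omega
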